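/- With h and H as in the context, let α ∈ ℝ and set E t := ∑_{i,j} ⟪H t, h t i j⟫² + α·‖H t‖⁴ and F t r s := 2·⟪H t, h t r s⟫·(H t) + (if r = s then (1/2)·∑_{i,j} ⟪H t, h t i j⟫·(h t i j) + α·‖H t‖²·(H t) else 0). Then for every t: ∑_{r,s} ⟪h t r s, (d/dt)(F t r s)⟫ = 3·(d/dt)(E t), where d/dt denotes the derivative in t. -/

import Mathlib

open scoped RealInnerProductSpace

/-- For the energy density `E t = |H·h|² + α‖H‖⁴` with flux
`F t r s = 2⟪H, h t r s⟫·H + δ_{rs}·((1/2)⟨H·h, h⟩ + α‖H‖²·H)`, one has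
`∑_{r,s} ⟪h t r s, ∂ₜ F t r s⟫ = 3 ∂ₜ E t`. -/
theorem stmt_19 {V : Type*} [NormedAddCommGroup V] [InnerProductSpace ℝ V]
    (h : ℝ → Fin 4 → Fin 4 → V)
    (hdiff : ∀ i j, Differentiable ℝ (fun t => h t i j))
    (hsymm : ∀ t i j, h t i j = h t j i)
    (H : ℝ → V) (hH : ∀ t, H t = (1 / 4 : ℝ) • ∑ i : Fin 4, h t i i)
    (α : ℝ)
    (E : ℝ → ℝ)
    (hE : ∀ t, E t = (∑ i : Fin 4, ∑ j : Fin 4, ⟪H t, h t i j⟫ ^ 2) + α * ‖H t‖ ^ 4)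
    (F : ℝ → Fin 4 → Fin 4 → V)
    (hF : ∀ t r s, F t r s
      = (2 * ⟪H t, h t r s⟫) • H t
        + (if r = s then
            (1 / 2 : ℝ) • (∑ i : Fin 4, ∑ j : Fin 4, ⟪H t, h t i j⟫ • h t i j)
              + (α * ‖H t‖ ^ 2) • H t
          else 0)) :
    ∀ t, ∑ r : Fin 4, ∑ s : Fin 4, ⟪h t r s, deriv (fun u => F u r s) t⟫
      = 3 * deriv E t := by
  intro t
  obtain ⟨h', hd⟩ : ∃ h' : Fin 4 → Fin 4 → V,
      ∀ i j, HasDerivAt (fun u => h u i j) (h' i j) t :=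
    ⟨_, fun i j => ((hdiff i j) t).hasDerivAt⟩
  obtain ⟨A', hA'⟩ : ∃ A', HasDerivAt H A' t := by
    refine ⟨(1/4:ℝ) • ∑ i : Fin 4, h' i i, ?_⟩
    have h1 : HasDerivAt (fun u => (1/4:ℝ) • ∑ i : Fin 4, h u i i)
        ((1/4:ℝ) • ∑ i : Fin 4, h' i i) t :=
      (HasDerivAt.fun_sum fun i _ => hd i i).const_smul _
    have h2 : (fun u => (1/4:ℝ) • ∑ i : Fin 4, h u i i) = H := funext fun u => (hH u).symm
    rwa [h2] at h1
  have hc : ∀ i j, HasDerivAt (fun u => ⟪H u, h u i j⟫)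
      (⟪H t, h' i j⟫ + ⟪A', h t i j⟫) t := fun i j => hA'.inner ℝ (hd i j)
  -- the "trace" part derivative
  obtain ⟨G', hGd, hGinner⟩ : ∃ G',
      HasDerivAt (fun u => (1/2:ℝ) • (∑ i : Fin 4, ∑ j : Fin 4, ⟪H u, h u i j⟫ • h u i j)
          + (α * ⟪H u, H u⟫) • H u) G' t ∧
      ⟪H t, G'⟫ = (1/2) * (∑ i : Fin 4, ∑ j : Fin 4,
          (⟪H t, h t i j⟫ * ⟪H t, h' i j⟫
            + (⟪H t, h' i j⟫ + ⟪A', h t i j⟫) * ⟪H t, h t i j⟫))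
        + (α * ⟪H t, H t⟫ * ⟪H t, A'⟫ + α * (⟪H t, A'⟫ + ⟪A', H t⟫) * ⟪H t, H t⟫) := by
    refine ⟨_, ((HasDerivAt.fun_sum fun i _ => HasDerivAt.fun_sum fun j _ =>
        (hc i j).smul (hd i j)).const_smul (1/2:ℝ)).add
        (((hA'.inner ℝ hA').const_mul α).smul hA'), ?_⟩
    simp [inner_add_right, inner_smul_right, inner_sum, Finset.mul_sum]
  have hderivF : ∀ r s, deriv (fun u => F u r s) t
      = ((2 * ⟪H t, h t r s⟫) • A' + (2 * (⟪H t, h' r s⟫ + ⟪A', h t r s⟫)) • H t)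
        + (if r = s then G' else 0) := by
    intro r s
    have hfun : (fun u => F u r s) = fun u =>
        (2 * ⟪H u, h u r s⟫) • H u
        + (if r = s then
            (1/2:ℝ) • (∑ i : Fin 4, ∑ j : Fin 4, ⟪H u, h u i j⟫ • h u i j)
              + (α * ⟪H u, H u⟫) • H u
          else 0) := by
      funext u
      rw [hF u r s, real_inner_self_eq_norm_sq]
    rw [hfun]
    by_cases hrs : r = s
    · simp only [if_pos hrs]
      exact ((((hc r s).const_mul 2).smul hA').add hGd).deriv
    · simp only [if_neg hrs, add_zero]
      exact (((hc r s).const_mul 2).smul hA').deriv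
  -- derivative of E
  have hderivE : deriv E t
      = (∑ i : Fin 4, ∑ j : Fin 4,
          (2:ℝ) * ⟪H t, h t i j⟫ ^ 1 * (⟪H t, h' i j⟫ + ⟪A', h t i j⟫))
        + α * ((2:ℝ) * ⟪H t, H t⟫ ^ 1 * (⟪H t, A'⟫ + ⟪A', H t⟫)) := by
    have hfun : E = fun u =>
        (∑ i : Fin 4, ∑ j : Fin 4, ⟪H u, h u i j⟫ ^ 2) + α * ⟪H u, H u⟫ ^ 2 := by
      funext u
      rw [hE u, real_inner_self_eq_norm_sq]
      ring
    rw [hfun]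
    exact ((HasDerivAt.fun_sum fun i _ => HasDerivAt.fun_sum fun j _ => (hc i j).pow 2).add
      (((hA'.inner ℝ hA').pow 2).const_mul α)).deriv
  -- assemble
  have hite : ∀ (r s : Fin 4) (x : V), ⟪x, if r = s then G' else 0⟫
      = if r = s then ⟪x, G'⟫ else 0 := by intro r s x; split <;> simp
  have h4A : ∑ r : Fin 4, ⟪h t r r, G'⟫ = 4 * ⟪H t, G'⟫ := by
    rw [← sum_inner, show ∑ r : Fin 4, h t r r = (4:ℝ) • H t by
      rw [hH t, smul_smul]; norm_num, real_inner_smul_left]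
  simp only [hderivF, hderivE, inner_add_right, inner_smul_right, hite,
    Finset.sum_ite_eq, Finset.mem_univ, if_true, Finset.sum_add_distrib]
  rw [h4A, hGinner]
  have hs1 : ∀ i j, ⟪h t i j, H t⟫ = ⟪H t, h t i j⟫ := fun i j => real_inner_comm _ _
  have hs2 : ∀ i j, ⟪h t i j, A'⟫ = ⟪A', h t i j⟫ := fun i j => real_inner_comm _ _
  have hs3 : ⟪A', H t⟫ = ⟪H t, A'⟫ := real_inner_comm _ _
  simp only [hs1, hs2, hs3, Fin.sum_univ_four]
  ring
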